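/- Let p be an odd prime. The number of residues a mod p with a² - 4 a quadratic nonresidue mod p is (p-1)/2. -/

import Mathlib

open Finset

lemma aux_two_ne_zero (p : ℕ) [Fact p.Prime] (hp : 3 ≤ p) : (2 : ZMod p) ≠ 0 := by
  have : ((2 : ℕ) : ZMod p) ≠ 0 := by
    rw [Ne, ZMod.natCast_eq_zero_iff]
    intro h
    have := Nat.le_of_dvd (by norm_num) h
    omega
  simpa using this

lemma aux_four_ne_zero (p : ℕ) [Fact p.Prime] (hp : 3 ≤ p) : (4 : ZMod p) ≠ 0 := by
  have h2 := aux_two_ne_zero p hp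
  have : (4 : ZMod p) = 2 * 2 := by norm_num
  rw [this]
  exact mul_ne_zero h2 h2

lemma aux_sum (p : ℕ) [Fact p.Prime] (hp : 3 ≤ p) :
    ∑ a : ZMod p, quadraticChar (ZMod p) (a ^ 2 - 4) = -1 := by
  have h2 : (2 : ZMod p) ≠ 0 := aux_two_ne_zero p hp
  have h4 : (4 : ZMod p) ≠ 0 := aux_four_ne_zero p hp
  have hchar : ringChar (ZMod p) ≠ 2 := by
    rw [ZMod.ringChar_zmod_n]
    omega
  -- split off a = 2
  have h2mem : (2 : ZMod p) ∈ (univ : Finset (ZMod p)) := mem_univ _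
  rw [← Finset.sum_erase_add _ _ h2mem]
  have hz : quadraticChar (ZMod p) ((2 : ZMod p) ^ 2 - 4) = 0 := by
    have : (2 : ZMod p) ^ 2 - 4 = 0 := by ring
    rw [this, quadraticChar_zero]
  rw [hz, add_zero]
  have key : ∑ a ∈ (univ : Finset (ZMod p)).erase 2,
      quadraticChar (ZMod p) (a ^ 2 - 4) =
      ∑ b ∈ (univ : Finset (ZMod p)).erase 1, quadraticChar (ZMod p) b := by
    refine Finset.sum_nbij' (fun a => 1 + 4 * (a - 2)⁻¹) (fun b => 2 + 4 * (b - 1)⁻¹)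
      ?_ ?_ ?_ ?_ ?_
    · intro a ha
      rw [mem_erase] at ha ⊢
      refine ⟨?_, mem_univ _⟩
      have hane : a - 2 ≠ 0 := sub_ne_zero.2 ha.1
      intro h
      have : 4 * (a - 2)⁻¹ = 0 := by linear_combination h
      rcases mul_eq_zero.1 this with h' | h'
      · exact h4 h'
      · exact hane (inv_eq_zero.1 h' ▸ rfl)
    · intro b hb
      rw [mem_erase] at hb ⊢
      refine ⟨?_, mem_univ _⟩
      have hbne : b - 1 ≠ 0 := sub_ne_zero.2 hb.1
      intro h
      have : 4 * (b - 1)⁻¹ = 0 := by linear_combination h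
      rcases mul_eq_zero.1 this with h' | h'
      · exact h4 h'
      · exact hbne (inv_eq_zero.1 h' ▸ rfl)
    · intro a ha
      rw [mem_erase] at ha
      have hane : a - 2 ≠ 0 := sub_ne_zero.2 ha.1
      field_simp
      rw [show a - 2 + 4 - (a - 2) = (4 : ZMod p) by ring, mul_div_cancel_left₀ _ h4]
      ring
    · intro b hb
      rw [mem_erase] at hb
      have hbne : b - 1 ≠ 0 := sub_ne_zero.2 hb.1
      show 1 + 4 * ((2 + 4 * (b - 1)⁻¹) - 2)⁻¹ = b
      have h' : (2 : ZMod p) + 4 * (b - 1)⁻¹ - 2 = 4 * (b - 1)⁻¹ := by ring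
      rw [h', mul_inv, inv_inv, ← mul_assoc, mul_inv_cancel₀ h4, one_mul]
      ring
    · intro a ha
      rw [mem_erase] at ha
      have hane : a - 2 ≠ 0 := sub_ne_zero.2 ha.1
      have hfact : a ^ 2 - 4 = (a - 2) ^ 2 * (1 + 4 * (a - 2)⁻¹) := by
        field_simp
        ring
      rw [hfact, map_mul, quadraticChar_sq_one' hane, one_mul]
  rw [key]
  have h1mem : (1 : ZMod p) ∈ (univ : Finset (ZMod p)) := mem_univ _
  have := Finset.sum_erase_add (univ : Finset (ZMod p))
    (fun b => quadraticChar (ZMod p) b) h1mem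
  rw [quadraticChar_sum_zero hchar] at this
  have h1 : quadraticChar (ZMod p) (1 : ZMod p) = 1 := by
    simpa using quadraticChar_sq_one' (F := ZMod p) (a := 1) one_ne_zero
  rw [h1] at this
  linarith

lemma aux_count (p : ℕ) [Fact p.Prime] (hp : 3 ≤ p) :
    ((univ : Finset (ZMod p)).filter
      (fun a => quadraticChar (ZMod p) (a ^ 2 - 4) = -1)).card = (p - 1) / 2 := by
  have h2 : (2 : ZMod p) ≠ 0 := aux_two_ne_zero p hp
  have h4 : (4 : ZMod p) ≠ 0 := aux_four_ne_zero p hp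
  set χ : ZMod p → ℤ := fun a => quadraticChar (ZMod p) (a ^ 2 - 4) with hχ
  have hpt : ∀ a : ZMod p, χ a = (if χ a = 1 then (1 : ℤ) else 0)
      - (if χ a = -1 then (1 : ℤ) else 0) := by
    intro a
    by_cases h0 : a ^ 2 - 4 = 0
    · have : χ a = 0 := by rw [hχ]; simp [h0]
      rw [this]; norm_num
    · rcases quadraticChar_dichotomy h0 with h | h <;> rw [hχ] at * <;> simp [h]
  have hsum : ∑ a : ZMod p, χ a =
      (((univ : Finset (ZMod p)).filter (fun a => χ a = 1)).card : ℤ)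
      - ((univ : Finset (ZMod p)).filter (fun a => χ a = -1)).card := by
    rw [Finset.sum_congr rfl (fun a _ => hpt a), Finset.sum_sub_distrib]
    simp
  rw [aux_sum p hp] at hsum
  -- partition cardinalities
  have hcards : ((univ : Finset (ZMod p)).filter (fun a => χ a = 1)).card
      + ((univ : Finset (ZMod p)).filter (fun a => χ a = -1)).card + 2 = p := by
    classical
    have hzero : ((univ : Finset (ZMod p)).filter (fun a => χ a = 0)).card = 2 := by
      have hset : (univ : Finset (ZMod p)).filter (fun a => χ a = 0) = {2, -2} := by
        ext a
        simp only [mem_filter, mem_univ, true_and, mem_insert, mem_singleton, hχ]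
        rw [quadraticChar_eq_zero_iff]
        constructor
        · intro h
          have : (a - 2) * (a + 2) = 0 := by linear_combination h
          rcases mul_eq_zero.1 this with h' | h'
          · exact Or.inl (by linear_combination h')
          · exact Or.inr (by linear_combination h')
        · rintro (rfl | rfl) <;> ring
      rw [hset]
      rw [card_insert_of_notMem, card_singleton]
      simp only [mem_singleton]
      intro h
      apply h4
      linear_combination (h : (2 : ZMod p) = -2)
    have htri : ∀ a : ZMod p, χ a = 1 ∨ χ a = -1 ∨ χ a = 0 := by
      intro a
      by_cases h0 : a ^ 2 - 4 = 0
      · right; right; rw [hχ]; simp [h0]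
      · rcases quadraticChar_dichotomy h0 with h | h
        · exact Or.inl h
        · exact Or.inr (Or.inl h)
    have hcard : Fintype.card (ZMod p) = p := ZMod.card p
    have h1 : ((univ : Finset (ZMod p)).filter (fun a => χ a = 1)).card
        + ((univ : Finset (ZMod p)).filter (fun a => ¬ χ a = 1)).card = p := by
      rw [Finset.card_filter_add_card_filter_not, card_univ, hcard]
    have h2' : ((univ : Finset (ZMod p)).filter (fun a => ¬ χ a = 1)).card
        = ((univ : Finset (ZMod p)).filter (fun a => χ a = -1)).card
          + ((univ : Finset (ZMod p)).filter (fun a => χ a = 0)).card := by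
      have eA : ((univ : Finset (ZMod p)).filter (fun a => ¬ χ a = 1)).filter
          (fun a => χ a = -1) = (univ : Finset (ZMod p)).filter (fun a => χ a = -1) := by
        rw [Finset.filter_filter]
        ext a
        simp only [mem_filter, mem_univ, true_and]
        constructor
        · rintro ⟨_, h⟩; exact h
        · intro h; exact ⟨by rw [h]; norm_num, h⟩
      have eB : ((univ : Finset (ZMod p)).filter (fun a => ¬ χ a = 1)).filter
          (fun a => ¬ χ a = -1) = (univ : Finset (ZMod p)).filter (fun a => χ a = 0) := by
        rw [Finset.filter_filter]
        ext a
        simp only [mem_filter, mem_univ, true_and]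
        constructor
        · rintro ⟨hne1, hnem1⟩
          rcases htri a with h | h | h
          · exact absurd h hne1
          · exact absurd h hnem1
          · exact h
        · intro h
          refine ⟨by rw [h]; norm_num, by rw [h]; norm_num⟩
      rw [← Finset.card_filter_add_card_filter_not
        (s := (univ : Finset (ZMod p)).filter (fun a => ¬ χ a = 1))
        (p := fun a => χ a = -1), eA, eB]
    omega
  simp only [hχ] at hsum hcards ⊢
  omega

theorem stmt_1 (p : ℕ) [Fact p.Prime] (hp : 3 ≤ p) :
    ((Finset.range p).filter
      (fun a : ℕ => legendreSym p ((a : ℤ) ^ 2 - 4) = -1)).card = (p - 1) / 2 := by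
  rw [← aux_count p hp]
  apply Finset.card_nbij (fun a : ℕ => (a : ZMod p))
  · intro a ha
    simp only [mem_coe, mem_filter, mem_range] at ha
    simp only [mem_coe, mem_filter, mem_univ, true_and]
    have : legendreSym p ((a : ℤ) ^ 2 - 4)
        = quadraticChar (ZMod p) (((a : ZMod p)) ^ 2 - 4) := by
      rw [legendreSym]
      congr 1
      push_cast
      ring
    rw [← this]
    exact ha.2
  · intro a ha b hb hab
    simp only [Set.mem_setOf_eq, coe_filter, mem_range] at ha hb
    have ha' := ha.1
    have hb' := hb.1
    have : a % p = b % p := by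
      have := congrArg ZMod.val hab
      rwa [ZMod.val_natCast, ZMod.val_natCast] at this
    rwa [Nat.mod_eq_of_lt ha', Nat.mod_eq_of_lt hb'] at this
  · intro b hb
    simp only [coe_filter, Set.mem_setOf_eq, mem_univ, true_and] at hb
    refine ⟨b.val, ?_, ?_⟩
    · simp only [coe_filter, Set.mem_setOf_eq, mem_range]
      refine ⟨ZMod.val_lt b, ?_⟩
      have : legendreSym p ((b.val : ℤ) ^ 2 - 4)
          = quadraticChar (ZMod p) ((b : ZMod p) ^ 2 - 4) := by
        rw [legendreSym]
        congr 1
        push_cast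
        rw [ZMod.natCast_val, ZMod.cast_id]
      rw [this]
      exact hb
    · show ((b.val : ℕ) : ZMod p) = b
      exact ZMod.natCast_zmod_val b
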